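/- Let G=(V,E) be a countable simple graph with weight function c : E → (0,∞). If (X_n) is a convergent sequence of subsets of V (i.e. liminf X_n = limsup X_n, with common value lim X_n), then d_c(lim X_n) ≤ liminf_n d_c(X_n). -/

import Mathlib

open Set Filter Topology ENNReal

noncomputable section

/-- The set of edges of `G` with exactly one endpoint in `X` (`out_G(X)`). -/
def outEdges {V : Type*} (G : SimpleGraph V) (X : Set V) : Set (Sym2 V) :=
  {e | e ∈ G.edgeSet ∧ ∃ x y, e = s(x, y) ∧ x ∈ X ∧ y ∉ X}

/-- `d_c(X)`: the total weight of the edges leaving `X`, a value in `[0,∞]`. -/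
def dCut {V : Type*} (G : SimpleGraph V) (c : Sym2 V → ℝ≥0∞) (X : Set V) : ℝ≥0∞ :=
  ∑' e : outEdges G X, c e

/-- Fatou's lemma for `tsum` in `ℝ≥0∞`. -/
lemma tsum_liminf_le_liminf_tsum {ι : Type*} (f : ℕ → ι → ℝ≥0∞) :
    ∑' i, Filter.liminf (fun n => f n i) Filter.atTop ≤
      Filter.liminf (fun n => ∑' i, f n i) Filter.atTop := by
  letI : MeasurableSpace ι := ⊤
  haveI : MeasurableSingletonClass ι := ⟨fun _ => trivial⟩
  calc ∑' i, Filter.liminf (fun n => f n i) Filter.atTop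
      = ∫⁻ i, Filter.liminf (fun n => f n i) Filter.atTop ∂MeasureTheory.Measure.count :=
        (MeasureTheory.lintegral_count _).symm
    _ ≤ Filter.liminf (fun n => ∫⁻ i, f n i ∂MeasureTheory.Measure.count) Filter.atTop :=
        MeasureTheory.lintegral_liminf_le (fun n => Measurable.of_comap_le le_top)
    _ = Filter.liminf (fun n => ∑' i, f n i) Filter.atTop := by
        simp only [MeasureTheory.lintegral_count]

/-- If `(X_n)` is a convergent sequence of subsets of `V` (i.e. `liminf Xₙ = limsup Xₙ`,
with common value `L = lim Xₙ`), then `d_c(lim Xₙ) ≤ liminf d_c(Xₙ)`. -/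
theorem dCut_limit_le_liminf {V : Type*} [Countable V] (G : SimpleGraph V)
    (c : Sym2 V → ℝ≥0∞) (hc : ∀ e ∈ G.edgeSet, 0 < c e ∧ c e < ⊤)
    (X : ℕ → Set V) (L : Set V)
    (hliminf : L = ⋃ m, ⋂ n, ⋂ (_ : m ≤ n), X n)
    (hlimsup : L = ⋂ m, ⋃ n, ⋃ (_ : m ≤ n), X n) :
    dCut G c L ≤ Filter.liminf (fun n => dCut G c (X n)) Filter.atTop := by
  have hrw : ∀ A : Set V, dCut G c A = ∑' e : Sym2 V, (outEdges G A).indicator c e := by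
    intro A; exact tsum_subtype _ _
  rw [hrw]
  simp only [hrw]
  refine le_trans ?_ (tsum_liminf_le_liminf_tsum (fun n e => (outEdges G (X n)).indicator c e))
  refine ENNReal.tsum_le_tsum fun e => ?_
  by_cases he : e ∈ outEdges G L
  · rw [Set.indicator_of_mem he]
    refine Filter.le_liminf_of_le (by isBoundedDefault) ?_
    obtain ⟨heE, x, y, rfl, hx, hy⟩ := he
    -- eventually x ∈ X n
    have hxev : ∀ᶠ n in Filter.atTop, x ∈ X n := by
      rw [hliminf] at hx
      obtain ⟨m, hm⟩ := Set.mem_iUnion.1 hx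
      simp only [Set.mem_iInter] at hm
      exact Filter.eventually_atTop.2 ⟨m, hm⟩
    have hyev : ∀ᶠ n in Filter.atTop, y ∉ X n := by
      rw [hlimsup, Set.mem_iInter] at hy
      push_neg at hy
      obtain ⟨m, hm⟩ := hy
      simp only [Set.mem_iUnion, not_exists] at hm
      exact Filter.eventually_atTop.2 ⟨m, fun n hn => hm n hn⟩
    filter_upwards [hxev, hyev] with n hxn hyn
    rw [Set.indicator_of_mem (show s(x,y) ∈ outEdges G (X n) from ⟨heE, x, y, rfl, hxn, hyn⟩)]
  · rw [Set.indicator_of_notMem he]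
    exact zero_le
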